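/- arXiv:2407.01826 — 2 statements merged into one kernel-verified Lean document; each statement's English description precedes it below -/
import Mathlib

section
/- (Theorem 4.4 of the paper, two-dimensional case.) Let A and B be random 4×4 rational matrices such that all eight columns (the four columns of A and the four columns of B) are independent and each is distributed as Θ(θ₁,…,θ₆) with θ₁,…,θ₆ independent uniform on {−1/2, 0}. Then the expected value of the random matrix L·Aᵀ + B (the 2-d transform error, column-pass errors propagated through the exact row transform plus row-pass errors) is the matrix e₁·E₁ᵀ + E₁·𝟙ᵀ; that is, its (i,j) entry equals (E₁)_i + (E₁)_j when i = 1 and equals (E₁)_i when i ≠ 1. -/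
open Matrix

/-- ZFP's forward decorrelating transform. -/
def L : Matrix (Fin 4) (Fin 4) ℚ :=
  (1 / 16 : ℚ) • !![4, 4, 4, 4; 5, 1, -1, -5; -4, 4, 4, -4; -2, 6, -6, 2]

/-- The error form `Θ(θ₁,…,θ₆)`. -/
def Theta (θ : Fin 6 → ℚ) : Fin 4 → ℚ :=
  ![-((θ 0 + θ 1) / 2 + θ 3),
    -((5 * θ 0 - θ 1) / 8 - (5 / 4) * θ 2 - θ 4 / 2 - θ 5),
    -((θ 1 - θ 0) / 2 - θ 3),
    -(-(θ 0 + 3 * θ 1) / 4 + θ 2 / 2 + θ 4)]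

/-- `E₁ = (1/2, -9/16, -1/4, 1/8)`. -/
def E1 : Fin 4 → ℚ := ![1 / 2, -(9 / 16), -(1 / 4), 1 / 8]

/-- A column distributed as `Θ(θ)`, `θ` uniform on `{-1/2,0}^6`, is indexed by
an outcome `f : Fin 6 → Fin 2`. -/
def colVal (f : Fin 6 → Fin 2) : Fin 4 → ℚ :=
  Theta fun j => ![(-(1 / 2) : ℚ), 0] (f j)


set_option maxRecDepth 4000

lemma sum_eval6 (j : Fin 6) (G : Fin 2 → ℚ) :
    ∑ f : Fin 6 → Fin 2, G (f j) = 2 ^ 5 * ∑ x : Fin 2, G x := by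
  rw [← Equiv.sum_comp (Equiv.piSplitAt j fun _ => Fin 2).symm (fun g => G (g j))]
  simp [Fintype.sum_prod_type, Equiv.piSplitAt_symm_apply, Finset.mul_sum]
  ring

lemma key (a : Fin 6 → ℚ) (c : ℚ) :
    ∑ f : Fin 6 → Fin 2, (c + ∑ j, a j * (![(-(1 / 2) : ℚ), 0] (f j))) =
      64 * c - 16 * ∑ j, a j := by
  rw [Finset.sum_add_distrib, Finset.sum_const, Finset.sum_comm]
  have h : ∀ j : Fin 6, ∑ f : Fin 6 → Fin 2, a j * (![(-(1 / 2) : ℚ), 0] (f j))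
      = a j * (-16) := by
    intro j
    rw [← Finset.mul_sum, sum_eval6 j]
    norm_num [Fin.sum_univ_two]
  simp only [h]
  rw [← Finset.sum_mul]
  have hc : (Finset.univ : Finset (Fin 6 → Fin 2)).card = 64 := by
    simp [Fintype.card_pi]
  rw [hc]
  ring

lemma sc (i : Fin 4) (a : Fin 6 → ℚ)
    (h : ∀ f : Fin 6 → Fin 2, colVal f i = 0 + ∑ j, a j * (![(-(1 / 2) : ℚ), 0] (f j))) :
    ∑ f : Fin 6 → Fin 2, colVal f i = -16 * ∑ j, a j := by
  rw [Finset.sum_congr rfl fun f _ => h f, key]; ring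

lemma cons_val_five' {α : Type*} (a b c d e g : α) : ![a,b,c,d,e,g] (5 : Fin 6) = g := rfl
lemma cv2 {α : Type*} (a b c d e g : α) : ![a,b,c,d,e,g] (2 : Fin 6) = c := rfl
lemma cv3 {α : Type*} (a b c d e g : α) : ![a,b,c,d,e,g] (3 : Fin 6) = d := rfl
lemma cv4 {α : Type*} (a b c d e g : α) : ![a,b,c,d,e,g] (4 : Fin 6) = e := rfl
lemma dv2 {α : Type*} (a b c d : α) : ![a,b,c,d] (2 : Fin 4) = c := rfl
lemma dv3 {α : Type*} (a b c d : α) : ![a,b,c,d] (3 : Fin 4) = d := rfl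

lemma sum_colVal (i : Fin 4) : ∑ f : Fin 6 → Fin 2, colVal f i = 64 * E1 i := by
  fin_cases i
  · rw [sc _ ![-(1/2 : ℚ), -(1/2), 0, -1, 0, 0]
      (fun f => by simp [colVal, Theta, Fin.sum_univ_six, cons_val_five']; ring)]
    norm_num [Fin.sum_univ_six, E1, cons_val_five', cv2, cv3, cv4]
  · rw [sc _ ![-(5/8 : ℚ), 1/8, 5/4, 0, 1/2, 1]
      (fun f => by simp [colVal, Theta, Fin.sum_univ_six, cons_val_five']; ring)]
    norm_num [Fin.sum_univ_six, E1, cons_val_five', cv2, cv3, cv4]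
  · rw [sc _ ![(1/2 : ℚ), -(1/2), 0, 1, 0, 0]
      (fun f => by simp [colVal, Theta, Fin.sum_univ_six, cons_val_five']; ring)]
    norm_num [Fin.sum_univ_six, E1, cons_val_five', cv2, cv3, cv4]
  · rw [sc _ ![(1/4 : ℚ), 3/4, -(1/2), 0, -1, 0]
      (fun f => by simp [colVal, Theta, Fin.sum_univ_six, cons_val_five']; ring)]
    norm_num [Fin.sum_univ_six, E1, cons_val_five', cv2, cv3, cv4]

lemma sum_eval4 (j : Fin 4) (F : (Fin 6 → Fin 2) → ℚ) :
    ∑ g : Fin 4 → Fin 6 → Fin 2, F (g j) = 2 ^ 18 * ∑ f : Fin 6 → Fin 2, F f := by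
  rw [← Equiv.sum_comp (Equiv.piSplitAt j fun _ => Fin 6 → Fin 2).symm (fun g => F (g j))]
  simp [Fintype.sum_prod_type, Equiv.piSplitAt_symm_apply, Finset.mul_sum]
  norm_num

lemma rowsumL (i : Fin 4) : ∑ k, L i k = ![1, 0, 0, 0] i := by
  fin_cases i <;> norm_num [L, Fin.sum_univ_four, dv2, dv3]

/-- **Theorem 4.4, 2-d case.**  If `A` and `B` are random `4×4` matrices whose
eight columns are independent, each distributed as `Θ(θ)` with `θ₁,…,θ₆`
independent uniform on `{-1/2,0}` (so the joint outcome is a uniform pair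
`(gA, gB)` of column configurations), then
`E[L·Aᵀ + B] = e₁·E₁ᵀ + E₁·𝟙ᵀ`. -/
theorem expected_2d_transform_error :
    ((2 : ℚ) ^ 48)⁻¹ •
        (∑ gA : Fin 4 → Fin 6 → Fin 2, ∑ gB : Fin 4 → Fin 6 → Fin 2,
          (L * (Matrix.of fun i j => colVal (gA j) i)ᵀ +
            Matrix.of fun i j => colVal (gB j) i)) =
      vecMulVec ![1, 0, 0, 0] E1 + vecMulVec E1 (fun _ => 1) := by
  have hcard : (Finset.univ : Finset (Fin 4 → Fin 6 → Fin 2)).card = 2 ^ 24 := by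
    rw [Finset.card_univ]
    norm_num [Fintype.card_pi]
  have hB : ∀ i j : Fin 4, ∑ gB : Fin 4 → Fin 6 → Fin 2, colVal (gB j) i
      = 2 ^ 24 * E1 i := by
    intro i j
    rw [sum_eval4 j (fun f => colVal f i), sum_colVal]
    ring
  ext i j
  simp only [Matrix.smul_apply, Matrix.sum_apply, Matrix.add_apply, Matrix.mul_apply,
    Matrix.transpose_apply, Matrix.of_apply, Matrix.vecMulVec_apply]
  have step1 : ∀ gA : Fin 4 → Fin 6 → Fin 2,
      ∑ gB : Fin 4 → Fin 6 → Fin 2,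
        (∑ k, L i k * colVal (gA k) j + colVal (gB j) i)
      = 2 ^ 24 * ∑ k, L i k * colVal (gA k) j + 2 ^ 24 * E1 i := by
    intro gA
    rw [Finset.sum_add_distrib, Finset.sum_const, hcard, hB, nsmul_eq_mul]
    push_cast
    ring
  rw [Finset.sum_congr rfl fun gA _ => step1 gA, Finset.sum_add_distrib,
    Finset.sum_const, hcard, ← Finset.mul_sum, Finset.sum_comm]
  have step2 : ∀ k : Fin 4, ∑ gA : Fin 4 → Fin 6 → Fin 2, L i k * colVal (gA k) j
      = L i k * (2 ^ 24 * E1 j) := by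
    intro k
    rw [← Finset.mul_sum, sum_eval4 k (fun f => colVal f j), sum_colVal]
    ring
  rw [Finset.sum_congr rfl fun k _ => step2 k, ← Finset.sum_mul, rowsumL, nsmul_eq_mul,
    smul_eq_mul]
  push_cast
  ring
end

section
/- (Biased error second moments, Table C.1 of the paper.) Let Y = (Y₁,Y₂,Y₃,Y₄) be a random vector whose components are independent and each uniformly distributed on the real interval (−2/3, 1/3). Then the second moments of the components of X := Linv·Y are E[X₁²] = 29/72, E[X₂²] = 17/24, E[X₃²] = 23/72, and E[X₄²] = 29/72. -/
open MeasureTheory Matrix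

/-- ZFP's backward decorrelating transform (over `ℝ`). -/
noncomputable def LinvR : Matrix (Fin 4) (Fin 4) ℝ :=
  (1 / 4 : ℝ) • !![4, 6, -4, -1; 4, 2, 4, 5; 4, -2, 4, -5; 4, -6, -4, 1]

/-- The law of `Y`: four independent coordinates, each uniform on the
unit-length interval `(-2/3, 1/3)`. -/
noncomputable def μbias : Measure (Fin 4 → ℝ) :=
  Measure.pi fun _ => volume.restrict (Set.Ioo (-(2 / 3) : ℝ) (1 / 3))

/-- The one-dimensional uniform measure on `(-2/3, 1/3)`. -/
noncomputable def νbias : Measure ℝ := volume.restrict (Set.Ioo (-(2 / 3) : ℝ) (1 / 3))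

instance : SigmaFinite νbias := by unfold νbias; infer_instance

theorem νbias_univ : (νbias Set.univ).toReal = 1 := by
  simp [νbias, Real.volume_Ioo]
  norm_num

theorem νbias_I0 : ∫ _x, (1:ℝ) ∂νbias = 1 := by
  simp [νbias, Real.volume_Ioo]
  norm_num

theorem νbias_I1 : ∫ x, x ∂νbias = -(1/6) := by
  rw [νbias, ← integral_Ioc_eq_integral_Ioo,
    ← intervalIntegral.integral_of_le (by norm_num : (-(2/3):ℝ) ≤ 1/3)]
  rw [integral_id]
  norm_num

theorem νbias_I2 : ∫ x, x * x ∂νbias = 1/9 := by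
  have h : ∀ x : ℝ, x * x = x ^ 2 := fun x => (sq x).symm
  simp_rw [h]
  rw [νbias, ← integral_Ioc_eq_integral_Ioo,
    ← intervalIntegral.integral_of_le (by norm_num : (-(2/3):ℝ) ≤ 1/3)]
  rw [integral_pow]
  norm_num

/-- A version of Fubini's theorem for pi measures on `Fin n → ℝ`. -/
theorem integral_pi_prod' {n : ℕ} (μ : Fin n → Measure ℝ) [∀ i, SigmaFinite (μ i)]
    (f : Fin n → ℝ → ℝ) :
    ∫ x, ∏ i, f i (x i) ∂Measure.pi μ = ∏ i, ∫ x, f i x ∂μ i := by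
  induction n with
  | zero => simp [Measure.real, Measure.pi_univ]
  | succ n ih =>
      calc
        _ = ∫ x : ℝ × (Fin n → ℝ),
            f 0 x.1 * ∏ i : Fin n, f (Fin.succ i) (x.2 i)
            ∂((μ 0).prod (Measure.pi fun i => μ (Fin.succ i))) := by
          rw [← ((measurePreserving_piFinSuccAbove μ 0).symm).integral_comp']
          simp_rw [MeasurableEquiv.piFinSuccAbove_symm_apply, Fin.insertNthEquiv,
            Fin.prod_univ_succ, Fin.insertNth_zero, Equiv.coe_fn_mk, Fin.cons_succ,
            Fin.zero_succAbove, cast_eq, Fin.cons_zero]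
        _ = (∫ x, f 0 x ∂μ 0) * ∏ i : Fin n, ∫ x, f (Fin.succ i) x ∂μ (Fin.succ i) := by
          rw [← ih, ← integral_prod_mul]
        _ = _ := by rw [Fin.prod_univ_succ]

theorem μbias_eq : μbias =
    (volume : Measure (Fin 4 → ℝ)).restrict
      (Set.univ.pi fun _ => Set.Ioo (-(2 / 3) : ℝ) (1 / 3)) := by
  refine (Measure.pi_eq fun s hs => ?_)
  rw [Measure.restrict_apply (MeasurableSet.univ_pi hs), ← Set.pi_inter_distrib,
    volume_pi, Measure.pi_pi]
  simp [Measure.restrict_apply (hs _)]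

theorem integrable_mul_bias (j k : Fin 4) :
    Integrable (fun y : Fin 4 → ℝ => y j * y k) μbias := by
  rw [μbias_eq]
  have hK : IsCompact (Set.univ.pi fun _ : Fin 4 => Set.Icc (-(2/3):ℝ) (1/3)) :=
    isCompact_univ_pi fun _ => isCompact_Icc
  have hc : Continuous (fun y : Fin 4 → ℝ => y j * y k) :=
    (continuous_apply j).mul (continuous_apply k)
  have h : IntegrableOn (fun y : Fin 4 → ℝ => y j * y k)
      (Set.univ.pi fun _ : Fin 4 => Set.Icc (-(2/3):ℝ) (1/3)) volume :=
    hc.continuousOn.integrableOn_compact hK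
  exact h.mono_set (Set.pi_mono fun i _ => Set.Ioo_subset_Icc_self)

theorem moment_bias (j k : Fin 4) :
    ∫ y, y j * y k ∂μbias = if j = k then (1:ℝ)/9 else 1/36 := by
  have h : ∀ y : Fin 4 → ℝ, y j * y k
      = ∏ i, ((if i = j then y i else 1) * (if i = k then y i else 1)) := by
    intro y
    rw [Finset.prod_mul_distrib, Finset.prod_ite_eq' Finset.univ j (fun i => y i),
      Finset.prod_ite_eq' Finset.univ k (fun i => y i)]
    simp
  simp_rw [h]
  rw [show μbias = Measure.pi fun _ => νbias from rfl, integral_pi_prod' (fun _ => νbias)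
    (fun i x => (if i = j then x else 1) * (if i = k then x else 1))]
  fin_cases j <;> fin_cases k <;>
    simp [Fin.prod_univ_four, νbias_I0, νbias_I1, νbias_I2, νbias_univ, show νbias.real Set.univ = 1 from νbias_univ, mul_one, one_mul] <;>
    norm_num

/-- **Biased error second moments (Table C.1).**  If `Y` has independent
components, each uniform on `(-2/3, 1/3)`, and `X = Linv·Y`, then
`E[X²] = (29/72, 17/24, 23/72, 29/72)`. -/
theorem biased_error_second_moments :
    ∀ i, ∫ y, LinvR.mulVec y i ^ 2 ∂μbias =
      ![29 / 72, 17 / 24, 23 / 72, (29 / 72 : ℝ)] i := by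
  intro i
  have hmv : ∀ y : Fin 4 → ℝ, LinvR.mulVec y i ^ 2
      = ∑ j, ∑ k, LinvR i j * LinvR i k * (y j * y k) := by
    intro y
    simp only [Matrix.mulVec, dotProduct]
    rw [sq, Finset.sum_mul_sum]
    exact Finset.sum_congr rfl fun j _ => Finset.sum_congr rfl fun k _ => by ring
  simp_rw [hmv]
  have hint : ∀ j k : Fin 4,
      Integrable (fun y : Fin 4 → ℝ => LinvR i j * LinvR i k * (y j * y k)) μbias :=
    fun j k => (integrable_mul_bias j k).const_mul _
  rw [integral_finset_sum _ fun j _ => integrable_finset_sum _ fun k _ => hint j k]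
  have hrow : ∀ j : Fin 4, ∫ y, ∑ k, LinvR i j * LinvR i k * (y j * y k) ∂μbias
      = ∑ k, LinvR i j * LinvR i k * (if j = k then (1:ℝ)/9 else 1/36) := by
    intro j
    rw [integral_finset_sum _ fun k _ => hint j k]
    exact Finset.sum_congr rfl fun k _ => by rw [MeasureTheory.integral_const_mul, moment_bias]
  simp_rw [hrow]
  fin_cases i <;>
    simp [LinvR, Fin.sum_univ_four] <;> norm_num
end
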